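/- Let E be a real inner product space and let A, B, C ∈ E be unit vectors with A + B ≠ 0 and B + C ≠ 0. Then [‖B‖²A + ‖A‖²B]/‖A+B‖² − [‖C‖²B + ‖B‖²C]/‖B+C‖² = (A+B)/‖A+B‖² − (B+C)/‖B+C‖², and this vector is orthogonal to B. -/

import Mathlib

/-- on the unit sphere the lattice for `Ṽ` coincides with the
discrete Heisenberg spin chain, and its right-hand side is tangent to the
sphere. -/
theorem tilde_lattice_on_sphere
    (E : Type*) [NormedAddCommGroup E] [InnerProductSpace ℝ E]
    (A B C : E)
    (hA : (inner ℝ A A : ℝ) = 1) (hB : (inner ℝ B B : ℝ) = 1)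
    (hC : (inner ℝ C C : ℝ) = 1)
    (hAB : A + B ≠ 0) (hBC : B + C ≠ 0) :
    (‖A + B‖^2)⁻¹ • ((‖B‖^2) • A + (‖A‖^2) • B)
        - (‖B + C‖^2)⁻¹ • ((‖C‖^2) • B + (‖B‖^2) • C)
      = (‖A + B‖^2)⁻¹ • (A + B) - (‖B + C‖^2)⁻¹ • (B + C) ∧
    (inner ℝ B ((‖A + B‖^2)⁻¹ • ((‖B‖^2) • A + (‖A‖^2) • B)
        - (‖B + C‖^2)⁻¹ • ((‖C‖^2) • B + (‖B‖^2) • C)) : ℝ) = 0 := by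
  have hnA : ‖A‖ ^ 2 = 1 := by rw [← real_inner_self_eq_norm_sq, hA]
  have hnB : ‖B‖ ^ 2 = 1 := by rw [← real_inner_self_eq_norm_sq, hB]
  have hnC : ‖C‖ ^ 2 = 1 := by rw [← real_inner_self_eq_norm_sq, hC]
  have hnAB : ‖A + B‖ ^ 2 = 2 + 2 * inner ℝ A B := by
    rw [← real_inner_self_eq_norm_sq, real_inner_add_add_self, hA, hB]; ring
  have hnBC : ‖B + C‖ ^ 2 = 2 + 2 * inner ℝ B C := by
    rw [← real_inner_self_eq_norm_sq, real_inner_add_add_self, hB, hC]; ring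
  have hAB0 : ‖A + B‖ ^ 2 ≠ 0 := by
    simpa using pow_ne_zero 2 (norm_ne_zero_iff.mpr hAB)
  have hBC0 : ‖B + C‖ ^ 2 ≠ 0 := by
    simpa using pow_ne_zero 2 (norm_ne_zero_iff.mpr hBC)
  constructor
  · rw [hnA, hnB, hnC]
    simp
  · rw [inner_sub_right, inner_smul_right, inner_smul_right,
      inner_add_right, inner_add_right, inner_smul_right, inner_smul_right,
      inner_smul_right, inner_smul_right, hB, hnA, hnB, hnC]
    rw [real_inner_comm A B]
    rw [hnAB] at hAB0 ⊢
    rw [hnBC] at hBC0 ⊢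
    set x := (inner ℝ A B : ℝ)
    set y := (inner ℝ B C : ℝ)
    have hx1 : 1 + x ≠ 0 := fun h => hAB0 (by linear_combination 2 * h)
    have hy1 : 1 + y ≠ 0 := fun h => hBC0 (by linear_combination 2 * h)
    field_simp
    ring
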